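/- For all t ∈ (0,1), the value log q(t) = -t(log t − ψ(t)) log t − γ log t is nonnegative, where ψ is the digamma function and γ the Euler–Mascheroni constant. -/

import Mathlib

noncomputable section
open Real Set

noncomputable def digamma (x : ℝ) : ℝ := deriv Real.Gamma x / Real.Gamma x

lemma digamma_le_log {t : ℝ} (ht : 0 < t) : digamma t ≤ Real.log t := by
  have hΓpos : 0 < Real.Gamma t := Real.Gamma_pos_of_pos ht
  have hdiff : DifferentiableAt ℝ Real.Gamma t :=
    Real.differentiableAt_Gamma (fun m => by have : (0:ℝ) ≤ m := Nat.cast_nonneg m; intro h; linarith)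
  have hlog : HasDerivAt (fun x => Real.log (Real.Gamma x))
      (deriv Real.Gamma t / Real.Gamma t) t :=
    hdiff.hasDerivAt.log hΓpos.ne'
  have hconv := Real.convexOn_log_Gamma
  have hslope := hconv.le_slope_of_hasDerivAt (x := t) (y := t + 1)
      (mem_Ioi.mpr ht) (mem_Ioi.mpr (by linarith)) (by linarith)
      (hlog.congr_of_eventuallyEq (by filter_upwards with x; rfl))
  have hΓ1 : Real.Gamma (t + 1) = t * Real.Gamma t := Real.Gamma_add_one ht.ne'
  have : slope (Real.log ∘ Real.Gamma) t (t + 1) = Real.log t := by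
    rw [slope_def_field, Function.comp_apply, Function.comp_apply, hΓ1,
      Real.log_mul ht.ne' hΓpos.ne']
    field_simp
    ring
  rw [this] at hslope
  exact hslope

theorem log_q_nonneg (t : ℝ) (ht : t ∈ Ioo (0:ℝ) 1) :
    0 ≤ -t * (Real.log t - digamma t) * Real.log t -
      Real.eulerMascheroniConstant * Real.log t := by
  obtain ⟨ht0, ht1⟩ := ht
  have hψ := digamma_le_log ht0
  have hL : Real.log t < 0 := Real.log_neg ht0 ht1
  have hγ : (1:ℝ)/2 < Real.eulerMascheroniConstant :=
    Real.one_half_lt_eulerMascheroniConstant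
  nlinarith [mul_nonneg (mul_nonneg ht0.le (sub_nonneg.mpr hψ)) (neg_nonneg.mpr hL.le)]
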